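/- For every positive integer d, the VC dimension of the class of all d-dimensional ellipsoids in ℝ^d is at least (d² + 3d)/2; equivalently, there exists a set of (d² + 3d)/2 points in ℝ^d (in fact on the unit sphere S^{d−1}) that is shattered by the class of d-dimensional ellipsoids. -/

import Mathlib

open Matrix

/-- A class `C` of subsets of `α` shatters a set `X` if every subset of `X`
is cut out of `X` by some member of `C`. -/
def Shatters {α : Type*} (C : Set (Set α)) (X : Set α) : Prop :=
  ∀ Y ⊆ X, ∃ B ∈ C, Y = X ∩ B

/-- The VC dimension of a class `C` of subsets: the supremum (in `ℕ∞`) of the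
cardinalities of finite sets shattered by `C`. -/
noncomputable def vcDim {α : Type*} (C : Set (Set α)) : ℕ∞ :=
  ⨆ (X : Finset α) (_ : Shatters C (X : Set α)), (X.card : ℕ∞)

/-- A `d`-dimensional ellipsoid: `{x ∈ ℝ^d : (x-μ)ᵀ A (x-μ) < 1}` for a center
`μ ∈ ℝ^d` and a (symmetric) positive definite matrix `A`. -/
def IsEllipsoid {d : ℕ} (E : Set (Fin d → ℝ)) : Prop :=
  ∃ (μ : Fin d → ℝ) (A : Matrix (Fin d) (Fin d) ℝ), A.PosDef ∧
    E = {x | (x - μ) ⬝ᵥ A.mulVec (x - μ) < 1}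

namespace VCEll
variable {d : ℕ}

lemma sum_sq_pos_of_ne_zero {x : Fin d → ℝ} (hx : x ≠ 0) : 0 < ∑ i, x i ^ 2 := by
  have h : ∃ i, x i ≠ 0 := by
    by_contra h
    push_neg at h
    exact hx (funext h)
  obtain ⟨i, hi⟩ := h
  exact Finset.sum_pos' (fun j _ => sq_nonneg _) ⟨i, Finset.mem_univ i, by positivity⟩

lemma abs_quad_le (A : Matrix (Fin d) (Fin d) ℝ) (x : Fin d → ℝ) :
    |x ⬝ᵥ A *ᵥ x| ≤ (∑ i, ∑ j, |A i j|) * ∑ i, x i ^ 2 := by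
  have hxx : ∀ i j : Fin d, |x i| * |x j| ≤ ∑ k, x k ^ 2 := by
    intro i j
    rcases eq_or_ne i j with rfl | hij
    · calc |x i| * |x i| = x i ^ 2 := by rw [← abs_mul, sq, abs_mul_self]
        _ ≤ ∑ k, x k ^ 2 := Finset.single_le_sum (f := fun k => x k ^ 2) (fun k _ => sq_nonneg _) (Finset.mem_univ i)
    · have h1 : |x i| * |x j| ≤ (x i ^ 2 + x j ^ 2) / 2 := by nlinarith [sq_nonneg (|x i| - |x j|), sq_abs (x i), sq_abs (x j)]
      have h2 : x i ^ 2 + x j ^ 2 ≤ ∑ k, x k ^ 2 := by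
        have := Finset.sum_le_sum_of_subset_of_nonneg
          (Finset.subset_univ ({i, j} : Finset (Fin d))) (fun k _ _ => sq_nonneg (x k))
        rwa [Finset.sum_pair hij] at this
      nlinarith [sq_nonneg (x i), sq_nonneg (x j)]
  have hexp : x ⬝ᵥ A *ᵥ x = ∑ i, ∑ j, x i * (A i j * x j) := by
    simp [dotProduct, mulVec, Finset.mul_sum]
  rw [hexp]
  calc |∑ i, ∑ j, x i * (A i j * x j)| ≤ ∑ i, |∑ j, x i * (A i j * x j)| :=
        Finset.abs_sum_le_sum_abs _ _
    _ ≤ ∑ i, ∑ j, |x i * (A i j * x j)| :=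
        Finset.sum_le_sum fun i _ => Finset.abs_sum_le_sum_abs _ _
    _ ≤ ∑ i, ∑ j, |A i j| * ∑ k, x k ^ 2 := by
        refine Finset.sum_le_sum fun i _ => Finset.sum_le_sum fun j _ => ?_
        rw [abs_mul, abs_mul]
        calc |x i| * (|A i j| * |x j|) = |A i j| * (|x i| * |x j|) := by ring
          _ ≤ |A i j| * ∑ k, x k ^ 2 :=
            mul_le_mul_of_nonneg_left (hxx i j) (abs_nonneg _)
    _ = (∑ i, ∑ j, |A i j|) * ∑ i, x i ^ 2 := by rw [Finset.sum_mul]; exact Finset.sum_congr rfl fun i _ => (Finset.sum_mul ..).symm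

lemma ellipsoid_of_quad (A : Matrix (Fin d) (Fin d) ℝ) (hA : Aᵀ = A) (b : Fin d → ℝ) (c : ℝ)
    (x₀ : Fin d → ℝ) (hx₀s : ∑ i, x₀ i ^ 2 = 1)
    (hx₀ : x₀ ⬝ᵥ A *ᵥ x₀ + b ⬝ᵥ x₀ + c < 0) :
    ∃ E, IsEllipsoid E ∧ ∀ x : Fin d → ℝ, ∑ i, x i ^ 2 = 1 →
      (x ∈ E ↔ x ⬝ᵥ A *ᵥ x + b ⬝ᵥ x + c < 0) := by
  classical
  set t : ℝ := 1 + ∑ i, ∑ j, |A i j| with ht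
  have htnn : (∑ i, ∑ j, |A i j|) ≤ t - 1 := by simp [ht]
  set M : Matrix (Fin d) (Fin d) ℝ := A + t • (1 : Matrix (Fin d) (Fin d) ℝ) with hM
  have hMsym : Mᵀ = M := by
    simp [hM, transpose_add, hA, transpose_smul, transpose_one]
  have hMone : ∀ x : Fin d → ℝ, x ⬝ᵥ M *ᵥ x = x ⬝ᵥ A *ᵥ x + t * ∑ i, x i ^ 2 := by
    intro x
    rw [hM, add_mulVec, dotProduct_add, smul_mulVec, one_mulVec, dotProduct_smul]
    congr 1
    rw [smul_eq_mul]
    congr 1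
    simp [dotProduct, sq]
  have hMpos : ∀ x : Fin d → ℝ, x ≠ 0 → 0 < x ⬝ᵥ M *ᵥ x := by
    intro x hx
    have hS := sum_sq_pos_of_ne_zero hx
    have h1 := abs_quad_le A x
    have h2 : -(x ⬝ᵥ A *ᵥ x) ≤ (t - 1) * ∑ i, x i ^ 2 := by
      have := (abs_le.mp h1).1
      nlinarith
    rw [hMone]
    nlinarith
  have hMpd : M.PosDef := by
    rw [posDef_iff_dotProduct_mulVec]
    constructor
    · show Mᴴ = M
      rw [conjTranspose_eq_transpose_of_trivial, hMsym]
    · intro x hx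
      simpa using hMpos x hx
  have hdet : IsUnit M.det := (ne_of_gt hMpd.det_pos).isUnit
  set μ : Fin d → ℝ := (-(1/2) : ℝ) • (M⁻¹ *ᵥ b) with hμ
  have hMμ : M *ᵥ μ = (-(1/2) : ℝ) • b := by
    rw [hμ, mulVec_smul, mulVec_mulVec, Matrix.mul_nonsing_inv _ hdet, one_mulVec]
  have hsq : ∀ x : Fin d → ℝ,
      (x - μ) ⬝ᵥ M *ᵥ (x - μ) = x ⬝ᵥ M *ᵥ x + b ⬝ᵥ x + μ ⬝ᵥ M *ᵥ μ := by
    intro x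
    have e1 : x ⬝ᵥ M *ᵥ μ = (-(1/2)) * (b ⬝ᵥ x) := by
      rw [hMμ, dotProduct_smul, smul_eq_mul, dotProduct_comm]
    have e2 : μ ⬝ᵥ M *ᵥ x = (-(1/2)) * (b ⬝ᵥ x) := by
      rw [dotProduct_mulVec, ← hMsym, vecMul_transpose, hMμ, smul_dotProduct, smul_eq_mul]
    rw [sub_dotProduct, mulVec_sub, dotProduct_sub, dotProduct_sub, e1, e2]
    ring
  set k : ℝ := μ ⬝ᵥ M *ᵥ μ - (c - t) with hk
  have hq : ∀ x : Fin d → ℝ, ∑ i, x i ^ 2 = 1 →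
      x ⬝ᵥ A *ᵥ x + b ⬝ᵥ x + c = (x - μ) ⬝ᵥ M *ᵥ (x - μ) - k := by
    intro x hx
    rw [hsq, hMone, hx, hk]
    ring
  have hquadnn : 0 ≤ (x₀ - μ) ⬝ᵥ M *ᵥ (x₀ - μ) := by
    rcases eq_or_ne (x₀ - μ) 0 with h | h
    · rw [h]; simp
    · exact le_of_lt (hMpos _ h)
  have hkpos : 0 < k := by
    have := hq x₀ hx₀s
    nlinarith
  refine ⟨{x | (x - μ) ⬝ᵥ (k⁻¹ • M) *ᵥ (x - μ) < 1}, ⟨μ, k⁻¹ • M, ?_, rfl⟩, ?_⟩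
  · rw [posDef_iff_dotProduct_mulVec]
    constructor
    · show (k⁻¹ • M)ᴴ = k⁻¹ • M
      rw [conjTranspose_eq_transpose_of_trivial, transpose_smul, hMsym]
    · intro x hx
      have : x ⬝ᵥ (k⁻¹ • M) *ᵥ x = k⁻¹ * (x ⬝ᵥ M *ᵥ x) := by
        rw [smul_mulVec, dotProduct_smul, smul_eq_mul]
      simp only [star_trivial]
      rw [this]
      exact mul_pos (inv_pos.mpr hkpos) (hMpos x hx)
  · intro x hxs
    have hmem : (x - μ) ⬝ᵥ (k⁻¹ • M) *ᵥ (x - μ) = k⁻¹ * ((x - μ) ⬝ᵥ M *ᵥ (x - μ)) := by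
      rw [smul_mulVec, dotProduct_smul, smul_eq_mul]
    simp only [Set.mem_setOf_eq, hmem, hq x hxs]
    rw [inv_mul_lt_iff₀ hkpos, mul_one, sub_neg]

noncomputable def rr : ℝ := (Real.sqrt 2)⁻¹

lemma sqrt2_mul_self : Real.sqrt 2 * Real.sqrt 2 = 2 := Real.mul_self_sqrt (by norm_num)

lemma sqrt2_pos : 0 < Real.sqrt 2 := Real.sqrt_pos.mpr (by norm_num)

lemma one_lt_sqrt2 : 1 < Real.sqrt 2 := by nlinarith [sqrt2_mul_self, sqrt2_pos]

lemma rr_pos : 0 < rr := inv_pos.mpr sqrt2_pos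

lemma rr_mul_rr : rr * rr = 1/2 := by
  rw [rr, ← mul_inv, sqrt2_mul_self]
  norm_num

lemma rr_add_rr : rr + rr = Real.sqrt 2 := by
  have h := sqrt2_mul_self
  have h2 := sqrt2_pos
  rw [rr]
  field_simp
  linarith

def pt1 {d : ℕ} (i : Fin d) : Fin d → ℝ := Pi.single i 1

def pt2 {d : ℕ} (i : Fin d) : Fin d → ℝ := Pi.single i (-1)

noncomputable def pt3 {d : ℕ} (i j : Fin d) : Fin d → ℝ := Pi.single i rr + Pi.single j rr

lemma sum_pt1 (i : Fin d) : ∑ k, pt1 i k = 1 := by simp [pt1]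

lemma sum_pt2 (i : Fin d) : ∑ k, pt2 i k = -1 := by simp [pt2]

lemma sum_pt3 (i j : Fin d) : ∑ k, pt3 i j k = Real.sqrt 2 := by
  simp [pt3, Finset.sum_add_distrib, rr_add_rr]

lemma sphere_single (i : Fin d) (a : ℝ) (ha : a^2 = 1) : ∑ k, (Pi.single i a : Fin d → ℝ) k ^ 2 = 1 := by
  have h : ∀ k ∈ Finset.univ, (Pi.single i a : Fin d → ℝ) k ^ 2 = (if k = i then a^2 else 0) := by
    intro k _
    rw [Pi.single_apply]
    split_ifs <;> simp
  rw [Finset.sum_congr rfl h]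
  simp [Finset.sum_ite_eq', ha]

lemma sphere_pt1 (i : Fin d) : ∑ k, pt1 i k ^ 2 = 1 := sphere_single i 1 (by norm_num)

lemma sphere_pt2 (i : Fin d) : ∑ k, pt2 i k ^ 2 = 1 := sphere_single i (-1) (by norm_num)

lemma sphere_pt3 {i j : Fin d} (hij : i ≠ j) : ∑ k, pt3 i j k ^ 2 = 1 := by
  simp only [pt3, Pi.add_apply, Pi.single_apply]
  have : ∀ k ∈ Finset.univ, ((if k = i then rr else 0) + (if k = j then rr else 0))^2
      = (if k = i then rr^2 else 0) + (if k = j then rr^2 else 0) := by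
    intro k _
    split_ifs with h1 h2
    · exact absurd (h1 ▸ h2) hij
    · ring
    · ring
    · ring
  rw [Finset.sum_congr rfl this, Finset.sum_add_distrib]
  simp only [Finset.sum_ite_eq', Finset.mem_univ, if_true]
  have := rr_mul_rr
  nlinarith

lemma quad_single_single (A : Matrix (Fin d) (Fin d) ℝ) (i j : Fin d) (a b : ℝ) :
    Pi.single i a ⬝ᵥ A *ᵥ Pi.single j b = a * (A i j * b) := by
  rw [mulVec_single, single_dotProduct]
  simp

open Classical in
noncomputable def sgn {d : ℕ} (Y : Set (Fin d → ℝ)) (x : Fin d → ℝ) : ℝ :=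
  if x ∈ Y then -1 else 1

noncomputable def bvec (Y : Set (Fin d → ℝ)) (i : Fin d) : ℝ :=
  (sgn Y (pt1 i) - sgn Y (pt2 i)) / 2

noncomputable def Adiag (Y : Set (Fin d → ℝ)) (i : Fin d) : ℝ :=
  (sgn Y (pt1 i) + sgn Y (pt2 i)) / 2

noncomputable def goff (Y : Set (Fin d → ℝ)) (i j : Fin d) : ℝ :=
  sgn Y (pt3 i j) - (Adiag Y i + Adiag Y j) / 2 - (bvec Y i + bvec Y j) * rr

noncomputable def Amat (Y : Set (Fin d → ℝ)) : Matrix (Fin d) (Fin d) ℝ :=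
  Matrix.of fun i j => if i = j then Adiag Y i else goff Y (min i j) (max i j)

lemma Amat_symm (Y : Set (Fin d → ℝ)) : (Amat Y)ᵀ = Amat Y := by
  ext i j
  simp only [transpose_apply, Amat, of_apply]
  rcases eq_or_ne i j with rfl | h
  · rfl
  · rw [if_neg (Ne.symm h), if_neg h, min_comm, max_comm]

lemma Amat_diag (Y : Set (Fin d → ℝ)) (i : Fin d) : Amat Y i i = Adiag Y i := if_pos rfl

lemma Amat_off (Y : Set (Fin d → ℝ)) {i j : Fin d} (h : i < j) :
    Amat Y i j = goff Y i j ∧ Amat Y j i = goff Y i j := by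
  constructor
  · rw [Amat, of_apply, if_neg h.ne, min_eq_left h.le, max_eq_right h.le]
  · rw [Amat, of_apply, if_neg h.ne', min_eq_right h.le, max_eq_left h.le]

noncomputable def qf (A : Matrix (Fin d) (Fin d) ℝ) (b : Fin d → ℝ) (x : Fin d → ℝ) : ℝ :=
  x ⬝ᵥ A *ᵥ x + b ⬝ᵥ x + 0

lemma qf_pt1 (Y : Set (Fin d → ℝ)) (i : Fin d) : qf (Amat Y) (bvec Y) (pt1 i) = sgn Y (pt1 i) := by
  have h : qf (Amat Y) (bvec Y) (pt1 i) = Adiag Y i + bvec Y i := by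
    rw [qf, pt1, quad_single_single, dotProduct_single, Amat_diag]
    ring
  rw [h, Adiag, bvec]
  ring

lemma qf_pt2 (Y : Set (Fin d → ℝ)) (i : Fin d) : qf (Amat Y) (bvec Y) (pt2 i) = sgn Y (pt2 i) := by
  have h : qf (Amat Y) (bvec Y) (pt2 i) = Adiag Y i - bvec Y i := by
    rw [qf, pt2, quad_single_single, dotProduct_single, Amat_diag]
    ring
  rw [h, Adiag, bvec]
  ring

lemma qf_pt3 (Y : Set (Fin d → ℝ)) {i j : Fin d} (h : i < j) :
    qf (Amat Y) (bvec Y) (pt3 i j) = sgn Y (pt3 i j) := by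
  obtain ⟨h1, h2⟩ := Amat_off Y h
  have hq : pt3 i j ⬝ᵥ Amat Y *ᵥ pt3 i j = rr * (Amat Y i i * rr) + rr * (Amat Y i j * rr)
      + rr * (Amat Y j i * rr) + rr * (Amat Y j j * rr) := by
    rw [pt3, mulVec_add, add_dotProduct, dotProduct_add, dotProduct_add,
      quad_single_single, quad_single_single, quad_single_single, quad_single_single]
    ring
  have hb : bvec Y ⬝ᵥ pt3 i j = bvec Y i * rr + bvec Y j * rr := by
    rw [pt3, dotProduct_add, dotProduct_single, dotProduct_single]
  have hg : goff Y i j = sgn Y (pt3 i j) - (Adiag Y i + Adiag Y j) / 2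
      - (bvec Y i + bvec Y j) * rr := rfl
  rw [qf, hq, hb, h1, h2, Amat_diag, Amat_diag, hg]
  linear_combination (2 * sgn Y (pt3 i j) - 2 * (bvec Y i + bvec Y j) * rr) * rr_mul_rr

lemma qf_eq (A : Matrix (Fin d) (Fin d) ℝ) (b : Fin d → ℝ) (x : Fin d → ℝ) :
    qf A b x = x ⬝ᵥ A *ᵥ x + b ⬝ᵥ x + 0 := rfl

variable (d) in
noncomputable def SS : Finset (Fin d → ℝ) :=
  (Finset.univ.image pt1 ∪ Finset.univ.image pt2) ∪
    ((Finset.univ.filter fun p : Fin d × Fin d => p.1 < p.2).image fun p => pt3 p.1 p.2)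

lemma pt1_inj : Function.Injective (pt1 (d := d)) := by
  intro i j h
  by_contra hne
  have h2 := congrFun h i
  rw [pt1, pt1, Pi.single_eq_same, Pi.single_eq_of_ne hne] at h2
  norm_num at h2

lemma pt2_inj : Function.Injective (pt2 (d := d)) := by
  intro i j h
  by_contra hne
  have h2 := congrFun h i
  rw [pt2, pt2, Pi.single_eq_same, Pi.single_eq_of_ne hne] at h2
  norm_num at h2

lemma pt3_apply (i j k : Fin d) :
    pt3 i j k = (if k = i then rr else 0) + (if k = j then rr else 0) := by
  simp [pt3, Pi.single_apply]

lemma pt3_ne_zero_iff {i j k : Fin d} (hij : i ≠ j) : pt3 i j k ≠ 0 ↔ (k = i ∨ k = j) := by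
  have hr := rr_pos
  rw [pt3_apply]
  split_ifs with h1 h2 <;> simp_all <;> linarith

lemma pt3_injOn {p q : Fin d × Fin d} (hp : p.1 < p.2) (hq : q.1 < q.2)
    (h : pt3 p.1 p.2 = pt3 q.1 q.2) : p = q := by
  have key : ∀ k : Fin d, (k = p.1 ∨ k = p.2) ↔ (k = q.1 ∨ k = q.2) := by
    intro k
    rw [← pt3_ne_zero_iff hp.ne, ← pt3_ne_zero_iff hq.ne, h]
  have h1 := (key p.1).mp (Or.inl rfl)
  have h2 := (key p.2).mp (Or.inr rfl)
  have h3 := (key q.1).mpr (Or.inl rfl)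
  have hprod : p.1 = q.1 ∧ p.2 = q.2 := by
    rcases h1 with e1 | e1 <;> rcases h2 with e2 | e2
    · exact absurd (e2 ▸ e1 ▸ hp) (lt_irrefl _)
    · exact ⟨e1, e2⟩
    · have hfalse : p.1 < p.1 := by
        calc p.1 < p.2 := hp
          _ = q.1 := e2
          _ < q.2 := hq
          _ = p.1 := e1.symm
      exact absurd hfalse (lt_irrefl _)
    · exact absurd (e2 ▸ e1 ▸ hp) (lt_irrefl _)
  exact Prod.ext hprod.1 hprod.2

lemma sphere_SS : ∀ x ∈ SS d, ∑ i, x i ^ 2 = 1 := by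
  intro x hx
  rw [SS, Finset.mem_union, Finset.mem_union] at hx
  rcases hx with (hx | hx) | hx
  · obtain ⟨i, -, rfl⟩ := Finset.mem_image.mp hx
    exact sphere_pt1 i
  · obtain ⟨i, -, rfl⟩ := Finset.mem_image.mp hx
    exact sphere_pt2 i
  · obtain ⟨p, hp, rfl⟩ := Finset.mem_image.mp hx
    exact sphere_pt3 (Finset.mem_filter.mp hp).2.ne

lemma qf_SS (Y : Set (Fin d → ℝ)) : ∀ x ∈ SS d, qf (Amat Y) (bvec Y) x = sgn Y x := by
  intro x hx
  rw [SS, Finset.mem_union, Finset.mem_union] at hx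
  rcases hx with (hx | hx) | hx
  · obtain ⟨i, -, rfl⟩ := Finset.mem_image.mp hx
    exact qf_pt1 Y i
  · obtain ⟨i, -, rfl⟩ := Finset.mem_image.mp hx
    exact qf_pt2 Y i
  · obtain ⟨p, hp, rfl⟩ := Finset.mem_image.mp hx
    exact qf_pt3 Y (Finset.mem_filter.mp hp).2

lemma card_SS (hd : 0 < d) : (SS d).card = (d ^ 2 + 3 * d) / 2 := by
  classical
  have hsum1 : ∀ i : Fin d, ∑ k, pt1 i k = 1 := sum_pt1
  -- disjointness
  have hd12 : Disjoint (Finset.univ.image (pt1 (d := d))) (Finset.univ.image pt2) := by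
    rw [Finset.disjoint_left]
    rintro x hx1 hx2
    obtain ⟨i, -, rfl⟩ := Finset.mem_image.mp hx1
    obtain ⟨j, -, hj⟩ := Finset.mem_image.mp hx2
    have : ∑ k, pt2 j k = ∑ k, pt1 i k := by rw [hj]
    rw [sum_pt1, sum_pt2] at this
    norm_num at this
  have hd123 : Disjoint (Finset.univ.image (pt1 (d := d)) ∪ Finset.univ.image pt2)
      ((Finset.univ.filter fun p : Fin d × Fin d => p.1 < p.2).image fun p => pt3 p.1 p.2) := by
    rw [Finset.disjoint_left]
    rintro x hx1 hx2
    obtain ⟨p, -, hp⟩ := Finset.mem_image.mp hx2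
    have hs2 := one_lt_sqrt2
    rcases Finset.mem_union.mp hx1 with hx | hx
    · obtain ⟨i, -, rfl⟩ := Finset.mem_image.mp hx
      have : ∑ k, pt3 p.1 p.2 k = ∑ k, pt1 i k := by rw [hp]
      rw [sum_pt1, sum_pt3] at this
      linarith
    · obtain ⟨i, -, rfl⟩ := Finset.mem_image.mp hx
      have : ∑ k, pt3 p.1 p.2 k = ∑ k, pt2 i k := by rw [hp]
      rw [sum_pt2, sum_pt3] at this
      linarith
  have hc1 : (Finset.univ.image (pt1 (d := d))).card = d := by
    rw [Finset.card_image_of_injective _ pt1_inj, Finset.card_univ, Fintype.card_fin]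
  have hc2 : (Finset.univ.image (pt2 (d := d))).card = d := by
    rw [Finset.card_image_of_injective _ pt2_inj, Finset.card_univ, Fintype.card_fin]
  set F := (Finset.univ.filter fun p : Fin d × Fin d => p.1 < p.2) with hF
  have hc3 : (F.image fun p => pt3 p.1 p.2).card = F.card := by
    apply Finset.card_image_of_injOn
    intro p hp q hq h
    exact pt3_injOn (Finset.mem_filter.mp hp).2 (Finset.mem_filter.mp hq).2 h
  have hFF : F.card + F.card = d * d - d := by
    have hswap : F.card = ((Finset.univ : Finset (Fin d × Fin d)).filter fun p => p.2 < p.1).card := by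
      apply Finset.card_bij (fun p _ => p.swap)
      · intro p hp
        rw [hF, Finset.mem_filter] at hp
        simp only [Finset.mem_filter, Finset.mem_univ, true_and, Prod.fst_swap, Prod.snd_swap]
        exact hp.2
      · intro p _ q _ h
        exact Prod.swap_injective h
      · intro q hq
        rw [Finset.mem_filter] at hq
        refine ⟨q.swap, ?_, Prod.swap_swap q⟩
        rw [hF, Finset.mem_filter]
        simpa using hq.2
    have hunion : F ∪ ((Finset.univ : Finset (Fin d × Fin d)).filter fun p => p.2 < p.1)
        = (Finset.univ : Finset (Fin d × Fin d)).filter fun p => p.1 ≠ p.2 := by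
      ext p
      simp only [Finset.mem_union, Finset.mem_filter, Finset.mem_univ, true_and, hF]
      constructor
      · rintro (h | h)
        · exact h.ne
        · exact h.ne'
      · intro h
        exact h.lt_or_gt
    have hdisj : Disjoint F ((Finset.univ : Finset (Fin d × Fin d)).filter fun p => p.2 < p.1) := by
      rw [Finset.disjoint_left]
      intro p hp1 hp2
      rw [hF, Finset.mem_filter] at hp1
      rw [Finset.mem_filter] at hp2
      exact absurd (hp1.2.trans hp2.2) (lt_irrefl _)
    have hoff : ((Finset.univ : Finset (Fin d × Fin d)).filter fun p => p.1 ≠ p.2)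
        = (Finset.univ : Finset (Fin d)).offDiag := by
      ext p
      simp [Finset.mem_offDiag]
    have := Finset.card_union_of_disjoint hdisj
    rw [hunion, hoff, Finset.offDiag_card, Finset.card_univ, Fintype.card_fin, ← hswap] at this
    exact this.symm
  rw [SS, Finset.card_union_of_disjoint hd123, Finset.card_union_of_disjoint hd12, hc1, hc2, hc3]
  have hle : d ≤ d * d := Nat.le_mul_of_pos_left d hd
  rw [pow_two]
  omega

lemma shatters_SS (hd : 0 < d) :
    Shatters {E : Set (Fin d → ℝ) | IsEllipsoid E} ((SS d : Finset (Fin d → ℝ)) : Set (Fin d → ℝ)) := by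
  classical
  intro Y hY
  rcases Y.eq_empty_or_nonempty with rfl | ⟨y₀, hy₀⟩
  · -- empty subset: a small ball far away
    set μ0 : Fin d → ℝ := fun _ => 10 with hμ0
    refine ⟨{x | (x - μ0) ⬝ᵥ (1 : Matrix (Fin d) (Fin d) ℝ).mulVec (x - μ0) < 1},
      ⟨μ0, 1, Matrix.PosDef.one, rfl⟩, ?_⟩
    symm
    rw [Set.eq_empty_iff_forall_notMem]
    rintro x ⟨hxS, hxE⟩
    rw [Finset.mem_coe] at hxS
    have hsx : ∑ i, x i ^ 2 = 1 := sphere_SS x hxS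
    rw [Set.mem_setOf_eq, one_mulVec] at hxE
    set i0 : Fin d := ⟨0, hd⟩
    have h1 : x i0 ^ 2 ≤ 1 := by
      rw [← hsx]
      exact Finset.single_le_sum (f := fun k => x k ^ 2) (fun k _ => sq_nonneg _)
        (Finset.mem_univ i0)
    have h2 : (1 : ℝ) ≤ (x - μ0) i0 * (x - μ0) i0 := by
      simp only [Pi.sub_apply, hμ0]
      nlinarith
    have h3 : (x - μ0) i0 * (x - μ0) i0 ≤ (x - μ0) ⬝ᵥ (x - μ0) :=
      Finset.single_le_sum (f := fun k => (x - μ0) k * (x - μ0) k)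
        (fun k _ => mul_self_nonneg _) (Finset.mem_univ i0)
    linarith
  · -- nonempty subset: use the interpolating quadratic
    have hy₀S : y₀ ∈ SS d := Finset.mem_coe.mp (hY hy₀)
    have hq0 : y₀ ⬝ᵥ Amat Y *ᵥ y₀ + bvec Y ⬝ᵥ y₀ + 0 < 0 := by
      have h := qf_SS Y y₀ hy₀S
      rw [qf] at h
      rw [h, sgn, if_pos hy₀]
      norm_num
    obtain ⟨E, hE, hiff⟩ := ellipsoid_of_quad (Amat Y) (Amat_symm Y) (bvec Y) 0 y₀
      (sphere_SS y₀ hy₀S) hq0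
    refine ⟨E, hE, ?_⟩
    ext x
    simp only [Set.mem_inter_iff, Finset.mem_coe]
    constructor
    · intro hx
      have hxS : x ∈ SS d := Finset.mem_coe.mp (hY hx)
      refine ⟨hxS, ?_⟩
      rw [hiff x (sphere_SS x hxS)]
      have h := qf_SS Y x hxS
      rw [qf] at h
      rw [h, sgn, if_pos hx]
      norm_num
    · rintro ⟨hxS, hxE⟩
      have h := (hiff x (sphere_SS x hxS)).mp hxE
      have hq := qf_SS Y x hxS
      rw [qf] at hq
      rw [hq] at h
      by_contra hxY
      rw [sgn, if_neg hxY] at h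
      norm_num at h

end VCEll

theorem vcDim_ellipsoids_lower (d : ℕ) (hd : 0 < d) :
    ((d ^ 2 + 3 * d) / 2 : ℕ) ≤ vcDim {E : Set (Fin d → ℝ) | IsEllipsoid E} ∧
    ∃ S : Finset (Fin d → ℝ), S.card = (d ^ 2 + 3 * d) / 2 ∧
      (∀ x ∈ S, ∑ i, x i ^ 2 = 1) ∧
      Shatters {E : Set (Fin d → ℝ) | IsEllipsoid E} (S : Set (Fin d → ℝ)) := by
  have hshat := VCEll.shatters_SS (d := d) hd
  have hcard := VCEll.card_SS (d := d) hd
  constructor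
  · rw [← hcard, vcDim]
    exact le_iSup₂ (f := fun (X : Finset (Fin d → ℝ))
      (_ : Shatters {E : Set (Fin d → ℝ) | IsEllipsoid E} (X : Set (Fin d → ℝ))) =>
      (X.card : ℕ∞)) (VCEll.SS d) hshat
  · exact ⟨VCEll.SS d, hcard, VCEll.sphere_SS, hshat⟩
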